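/- Let k ≥ 2 be an integer and let A ⊆ Σ_k^* be an infinite k-arid set. Then there exists a word v ∈ Σ_k^* such that A ∩ vΣ_k^* = ⋃_{i=1}^{p} {v w^l u_i : l ∈ ℕ₀} for some integer p ≥ 1 and words w, u_1, …, u_p ∈ Σ_k^* with w ≠ ε; in particular, A ∩ vΣ_k^* is k-arid of rank ≤ 1. Here vΣ_k^* denotes the set of words having v as a prefix. -/

import Mathlib

open Filter Topology

/-- The `k`-kernel of a sequence: all subsequences `n ↦ f (k^l * n + r)` with `0 ≤ r < k^l`. -/
def kKernel {Ω : Type*} (k : ℕ) (f : ℕ → Ω) : Set (ℕ → Ω) :=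
  {g | ∃ l r : ℕ, r < k ^ l ∧ g = fun n => f (k ^ l * n + r)}

/-- A sequence is `k`-automatic if its `k`-kernel is finite. -/
def IsKAutomatic {Ω : Type*} (k : ℕ) (f : ℕ → Ω) : Prop :=
  (kKernel k f).Finite

/-- A sequence `f` is weakly periodic if every restriction `n ↦ f (a n + b)` (with `a ≥ 1`)
agrees along two distinct residues `r ≠ r'` modulo some `q ≥ 1`. -/
def WeaklyPeriodic {Ω : Type*} (f : ℕ → Ω) : Prop :=
  ∀ a b : ℕ, 0 < a → ∃ q r r' : ℕ, 0 < q ∧ r ≠ r' ∧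
    ∀ n : ℕ, f (a * (q * n + r) + b) = f (a * (q * n + r') + b)

/-- A sequence is periodic (with some period `q ≥ 1`). -/
def PeriodicSeq {Ω : Type*} (f : ℕ → Ω) : Prop :=
  ∃ q : ℕ, 0 < q ∧ ∀ n : ℕ, f (n + q) = f n

/-- The `l`-fold concatenation of the word `w` with itself. -/
def wpow {σ : Type*} (w : List σ) (l : ℕ) : List σ := (List.replicate l w).flatten

/-- The integer whose base-`k` expansion (most significant digit first) is the word `u`. -/
def wordVal (k : ℕ) (u : List (Fin k)) : ℕ :=
  u.foldl (fun acc d => acc * k + (d : ℕ)) 0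

/-- A basic `k`-arid set of words of rank `≤ r`:
`{v₀ w₁^{l₁} v₁ w₂^{l₂} ⋯ w_r^{l_r} v_r : l₁, …, l_r ∈ ℕ}`. -/
def IsBasicArid (k r : ℕ) (A : Set (List (Fin k))) : Prop :=
  ∃ (v : Fin (r + 1) → List (Fin k)) (w : Fin r → List (Fin k)),
    A = {u | ∃ l : Fin r → ℕ,
      u = (List.ofFn fun i : Fin r => v i.castSucc ++ wpow (w i) (l i)).flatten
        ++ v (Fin.last r)}

/-- A `k`-arid set of words of rank `≤ r` is a finite union of basic ones. -/
def IsArid (k r : ℕ) (A : Set (List (Fin k))) : Prop :=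
  ∃ (m : ℕ) (B : Fin m → Set (List (Fin k))),
    (∀ i, IsBasicArid k r (B i)) ∧ A = ⋃ i, B i

/-- A set `E ⊆ ℕ` is `k`-arid of rank `≤ r` if it is the set of values of a `k`-arid
set of words of rank `≤ r`. -/
def IsAridNat (k r : ℕ) (E : Set ℕ) : Prop :=
  ∃ A : Set (List (Fin k)), IsArid k r A ∧ E = wordVal k '' A



open List

variable {σ : Type*}

/-- Left quotient of a language by a word. -/
def lquot (u : List σ) (S : Set (List σ)) : Set (List σ) := {y | u ++ y ∈ S}

@[simp] lemma lquot_nil (S : Set (List σ)) : lquot [] S = S := rfl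

lemma lquot_append (u v : List σ) (S : Set (List σ)) :
    lquot (u ++ v) S = lquot v (lquot u S) := by
  ext y; simp [lquot, List.append_assoc]

lemma lquot_cons (a : σ) (u : List σ) (S : Set (List σ)) :
    lquot (a :: u) S = lquot u (lquot [a] S) := by
  simpa using lquot_append [a] u S

@[simp] lemma wpow_zero (w : List σ) : wpow w 0 = [] := rfl

lemma wpow_succ (w : List σ) (l : ℕ) : wpow w (l + 1) = w ++ wpow w l := by
  simp [wpow, List.replicate_succ]

@[simp] lemma wpow_nil (l : ℕ) : wpow ([] : List σ) l = [] := by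
  induction l with
  | zero => rfl
  | succ n ih => rw [wpow_succ, ih]; rfl

lemma length_wpow (w : List σ) (l : ℕ) : (wpow w l).length = l * w.length := by
  simp [wpow, List.length_flatten, List.map_replicate, List.sum_replicate, Nat.smul_one_eq_cast]

lemma lquot_wpow {w : List σ} {S : Set (List σ)} (h : lquot w S = S) (l : ℕ) :
    lquot (wpow w l) S = S := by
  induction l with
  | zero => simp
  | succ n ih => rw [wpow_succ, lquot_append, h, ih]

section Patterns

variable {σ : Type*}

/-- Language of a "pattern": a list of literal (`inl`) and starred (`inr`) words. -/
def plang : List (List σ ⊕ List σ) → Set (List σ)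
  | [] => {[]}
  | (Sum.inl v) :: P => {x | ∃ y ∈ plang P, x = v ++ y}
  | (Sum.inr w) :: P => {x | ∃ l, ∃ y ∈ plang P, x = wpow w l ++ y}

/-- One-letter quotient on the level of patterns (returns a list of patterns whose
languages union to the quotient). -/
def stepQ [DecidableEq σ] (a : σ) : List (List σ ⊕ List σ) → List (List (List σ ⊕ List σ))
  | [] => []
  | (Sum.inl []) :: P => stepQ a P
  | (Sum.inl (b :: t)) :: P => if a = b then [Sum.inl t :: P] else []
  | (Sum.inr w) :: P =>
      (match w with
        | [] => []
        | b :: t => if a = b then [Sum.inl t :: Sum.inr w :: P] else []) ++ stepQ a P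

lemma stepQ_correct [DecidableEq σ] (a : σ) (P : List (List σ ⊕ List σ)) :
    lquot [a] (plang P) = ⋃ Q ∈ stepQ a P, plang Q := by
  induction P with
  | nil =>
      ext y; simp [stepQ, lquot, plang]
  | cons hd P ih =>
      match hd with
      | Sum.inl [] =>
          rw [stepQ]
          rw [← ih]; ext y; simp [lquot, plang]
      | Sum.inl (b :: t) =>
          ext y
          by_cases hab : a = b
          · subst hab
            simp only [stepQ, if_pos rfl]
            constructor
            · rintro hy
              obtain ⟨z, hz, hzz⟩ := hy
              simp only [List.cons_append, List.cons.injEq] at hzz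
              simp only [Set.mem_iUnion]
              exact ⟨Sum.inl t :: P, by simp, ⟨z, hz, hzz.2⟩⟩
            · intro hy
              simp only [Set.mem_iUnion] at hy
              obtain ⟨Q, hQ, hyQ⟩ := hy
              have hQ2 : Q = Sum.inl t :: P := by simpa using hQ
              subst hQ2
              obtain ⟨z, hz, hzz⟩ := hyQ
              exact ⟨z, hz, by simp [hzz]⟩
          · simp only [stepQ, if_neg hab]
            constructor
            · rintro ⟨z, hz, hzz⟩
              simp only [List.cons_append, List.cons.injEq] at hzz
              exact absurd hzz.1 hab
            · intro hy; simp at hy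
      | Sum.inr [] =>
          ext y
          simp only [stepQ, List.nil_append]
          rw [← ih]
          simp [lquot, plang]
      | Sum.inr (b :: t) =>
          ext y
          simp only [stepQ]
          constructor
          · rintro ⟨l, z, hz, hzz⟩
            match l with
            | 0 =>
              simp only [wpow_zero, List.nil_append] at hzz
              subst hzz
              have : y ∈ lquot [a] (plang P) := hz
              rw [ih] at this
              simp only [Set.mem_iUnion] at this ⊢
              obtain ⟨Q, hQ, h2⟩ := this
              exact ⟨Q, by simp [hQ], h2⟩
            | Nat.succ l =>
              rw [wpow_succ] at hzz
              simp only [List.cons_append, List.append_assoc, List.cons.injEq] at hzz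
              obtain ⟨hab, hy⟩ := hzz
              subst hab
              simp only [Set.mem_iUnion]
              refine ⟨Sum.inl t :: Sum.inr (a :: t) :: P, by simp, ?_⟩
              exact ⟨wpow (a :: t) l ++ z, ⟨l, z, hz, rfl⟩, by simpa using hy⟩
          · intro hy
            simp only [Set.mem_iUnion] at hy
            obtain ⟨Q, hQ, hyQ⟩ := hy
            simp only [List.mem_append] at hQ
            rcases hQ with hQ | hQ
            · by_cases hab : a = b
              · subst hab
                have hQ2 : Q = Sum.inl t :: Sum.inr (a :: t) :: P := by simpa using hQ
                subst hQ2
                obtain ⟨z, hz, hzz⟩ := hyQ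
                obtain ⟨l, z', hz', hz''⟩ := hz
                refine ⟨l + 1, z', hz', ?_⟩
                rw [wpow_succ]
                simp [hzz, hz'']
              · simp [if_neg hab] at hQ
            · have : y ∈ lquot [a] (plang P) := by
                rw [ih]; simp only [Set.mem_iUnion]; exact ⟨Q, hQ, hyQ⟩
              exact ⟨0, a :: y, this, by simp⟩
    
end Patterns

section Good

variable {σ : Type*}

/-- All words (with multiplicity pattern forgotten) appearing in a pattern have length
bounded by this. -/
def patBound (P₀ : List (List σ ⊕ List σ)) : ℕ :=
  (P₀.map (Sum.elim List.length List.length)).sum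

def GoodPat (P₀ P : List (List σ ⊕ List σ)) : Prop :=
  P <:+ P₀ ∨ ∃ t T, P = Sum.inl t :: T ∧ T <:+ P₀ ∧ t.length ≤ patBound P₀

lemma goodPat_self (P₀ : List (List σ ⊕ List σ)) : GoodPat P₀ P₀ :=
  Or.inl (List.suffix_refl P₀)

lemma goodPat_finite [Finite σ] (P₀ : List (List σ ⊕ List σ)) :
    {P | GoodPat P₀ P}.Finite := by
  have h1 : {P : List (List σ ⊕ List σ) | P <:+ P₀}.Finite := by
    apply Set.Finite.subset (P₀.tails : List _).finite_toSet
    intro P hP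
    simpa [List.mem_tails] using hP
  have h2 : {t : List σ | t.length ≤ patBound P₀}.Finite := List.finite_length_le σ _
  have : {P | GoodPat P₀ P} ⊆
      {P | P <:+ P₀} ∪ (Set.image2 (fun t T => Sum.inl t :: T)
        {t : List σ | t.length ≤ patBound P₀} {P | P <:+ P₀}) := by
    rintro P (hP | ⟨t, T, rfl, hT, ht⟩)
    · exact Or.inl hP
    · exact Or.inr ⟨t, ht, T, hT, rfl⟩
  exact Set.Finite.subset (h1.union (Set.Finite.image2 _ h2 h1)) this

lemma wordlen_le_patBound {P₀ P : List (List σ ⊕ List σ)} (h : P <:+ P₀)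
    {x : List σ ⊕ List σ} (hx : x ∈ P) :
    (Sum.elim List.length List.length x) ≤ patBound P₀ := by
  apply List.single_le_sum (by simp)
  exact List.mem_map_of_mem (h.subset hx)

lemma goodPat_step [DecidableEq σ] {P₀ : List (List σ ⊕ List σ)} (a : σ) :
    ∀ P : List (List σ ⊕ List σ), GoodPat P₀ P → ∀ Q ∈ stepQ a P, GoodPat P₀ Q := by
  intro P
  induction P with
  | nil => intro _ Q hQ; simp [stepQ] at hQ
  | cons hd P ih =>
    intro hgood Q hQ
    have hPsuf : P <:+ P₀ := by
      rcases hgood with h | ⟨t, T, heq, hT, ht⟩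
      · exact ((List.suffix_cons hd P).trans h)
      · cases heq; exact hT
    match hd, hgood, hQ with
    | Sum.inl [], hgood, hQ =>
        rw [stepQ] at hQ
        exact ih (Or.inl hPsuf) Q hQ
    | Sum.inl (b :: t), hgood, hQ =>
        rw [stepQ] at hQ
        split at hQ
        · have hQ2 : Q = Sum.inl t :: P := by simpa using hQ
          subst hQ2
          refine Or.inr ⟨t, P, rfl, hPsuf, ?_⟩
          have : (b :: t).length ≤ patBound P₀ := by
            rcases hgood with h | ⟨t', T, heq, hT, ht⟩
            · exact wordlen_le_patBound h (x := Sum.inl (b :: t)) (by simp)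
            · simp only [List.cons.injEq] at heq
              obtain ⟨h1, h2⟩ := heq
              cases h1; exact ht
          simpa using Nat.le_of_succ_le this
        · simp at hQ
    | Sum.inr [], hgood, hQ =>
        simp only [stepQ, List.nil_append] at hQ
        exact ih (Or.inl hPsuf) Q hQ
    | Sum.inr (b :: t), hgood, hQ =>
        have hsuf : Sum.inr (b :: t) :: P <:+ P₀ := by
          rcases hgood with h | ⟨t', T, heq, hT, ht⟩
          · exact h
          · simp at heq
        simp only [stepQ, List.mem_append] at hQ
        rcases hQ with hQ | hQ
        · split at hQ
          · have hQ2 : Q = Sum.inl t :: Sum.inr (b :: t) :: P := by simpa using hQ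
            subst hQ2
            refine Or.inr ⟨t, Sum.inr (b :: t) :: P, rfl, hsuf, ?_⟩
            have := wordlen_le_patBound hsuf (x := Sum.inr (b :: t)) (by simp)
            simpa using Nat.le_of_succ_le this
          · simp at hQ
        · exact ih (Or.inl hPsuf) Q hQ

lemma lquot_biUnion {ι : Type*} (u : List σ) (s : Set ι) (f : ι → Set (List σ)) :
    lquot u (⋃ i ∈ s, f i) = ⋃ i ∈ s, lquot u (f i) := by
  ext y; simp [lquot]

lemma lquot_plang_good [DecidableEq σ] (P₀ : List (List σ ⊕ List σ)) :
    ∀ (u : List σ) (P : List (List σ ⊕ List σ)), GoodPat P₀ P →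
      ∃ S : Set (List (List σ ⊕ List σ)), (∀ Q ∈ S, GoodPat P₀ Q) ∧
        lquot u (plang P) = ⋃ Q ∈ S, plang Q := by
  intro u
  induction u with
  | nil =>
    intro P hP
    exact ⟨{P}, by simpa using hP, by simp⟩
  | cons a u ih =>
    intro P hP
    have hstep := goodPat_step a P hP
    have hchoice : ∀ Q : {Q // Q ∈ stepQ a P}, ∃ S : Set (List (List σ ⊕ List σ)),
        (∀ Q' ∈ S, GoodPat P₀ Q') ∧ lquot u (plang Q.1) = ⋃ Q' ∈ S, plang Q' :=
      fun Q => ih Q.1 (hstep Q.1 Q.2)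
    choose Sf hSf using hchoice
    refine ⟨⋃ Q : {Q // Q ∈ stepQ a P}, Sf Q, ?_, ?_⟩
    · intro Q' hQ'
      simp only [Set.mem_iUnion] at hQ'
      obtain ⟨Q, hQ⟩ := hQ'
      exact (hSf Q).1 Q' hQ
    · rw [lquot_cons, stepQ_correct]
      have hdist : lquot u (⋃ Q ∈ stepQ a P, plang Q) = ⋃ Q ∈ stepQ a P, lquot u (plang Q) := by
        ext y; simp [lquot]
      rw [hdist]
      ext y
      simp only [Set.mem_iUnion]
      constructor
      · rintro ⟨Q, hQ, hy⟩
        rw [(hSf ⟨Q, hQ⟩).2] at hy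
        simp only [Set.mem_iUnion] at hy
        obtain ⟨Q', hQ', hy⟩ := hy
        exact ⟨Q', ⟨⟨Q, hQ⟩, hQ'⟩, hy⟩
      · rintro ⟨Q', ⟨Q, hQ'⟩, hy⟩
        refine ⟨Q.1, Q.2, ?_⟩
        rw [(hSf Q).2]
        simp only [Set.mem_iUnion]
        exact ⟨Q', hQ', hy⟩

/-- An arid set, being a finite union of pattern languages, has finitely many left
quotients. -/
lemma quot_finite_of_patterns [DecidableEq σ] [Finite σ] {m : ℕ}
    (Pf : Fin m → List (List σ ⊕ List σ)) (A : Set (List σ))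
    (hA : A = ⋃ i, plang (Pf i)) :
    {B | ∃ u : List σ, B = lquot u A}.Finite := by
  set G : Set (List (List σ ⊕ List σ)) := ⋃ i, {P | GoodPat (Pf i) P} with hG
  have hGfin : G.Finite := Set.finite_iUnion fun i => goodPat_finite (Pf i)
  have key : ∀ u, ∃ S ⊆ G, lquot u A = ⋃ Q ∈ S, plang Q := by
    intro u
    have := fun i => lquot_plang_good (Pf i) u (Pf i) (goodPat_self (Pf i))
    choose Sf hSf1 hSf2 using this
    refine ⟨⋃ i, Sf i, ?_, ?_⟩
    · intro Q hQ
      simp only [Set.mem_iUnion] at hQ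
      obtain ⟨i, hi⟩ := hQ
      exact Set.mem_iUnion.2 ⟨i, hSf1 i Q hi⟩
    · rw [hA]
      have : lquot u (⋃ i, plang (Pf i)) = ⋃ i, lquot u (plang (Pf i)) := by
        ext y; simp [lquot]
      rw [this]
      ext y
      simp only [Set.mem_iUnion]
      constructor
      · rintro ⟨i, hy⟩
        rw [hSf2 i] at hy
        simp only [Set.mem_iUnion] at hy
        obtain ⟨Q, hQ, hy⟩ := hy
        exact ⟨Q, ⟨i, hQ⟩, hy⟩
      · rintro ⟨Q, ⟨i, hQ⟩, hy⟩
        refine ⟨i, ?_⟩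
        rw [hSf2 i]
        simp only [Set.mem_iUnion]
        exact ⟨Q, hQ, hy⟩
  have : {B | ∃ u : List σ, B = lquot u A} ⊆
      (fun S => ⋃ Q ∈ S, plang Q) '' {S | S ⊆ G} := by
    rintro B ⟨u, rfl⟩
    obtain ⟨S, hS, hSeq⟩ := key u
    exact ⟨S, hS, hSeq.symm⟩
  exact Set.Finite.subset ((hGfin.finite_subsets).image _) this

end Good

section Convert

variable {σ : Type*}

lemma ofFn_flatten_succ (r : ℕ) (v : Fin (r + 2) → List σ)
    (w : Fin (r + 1) → List σ) (l : Fin (r + 1) → ℕ) :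
    (List.ofFn fun i : Fin (r + 1) => v i.castSucc ++ wpow (w i) (l i)).flatten
      ++ v (Fin.last (r + 1))
    = v 0 ++ (wpow (w 0) (l 0) ++
        ((List.ofFn fun i : Fin r =>
          (fun j => v j.succ) i.castSucc ++ wpow ((fun j => w j.succ) i) (l i.succ)).flatten
          ++ (fun j => v j.succ) (Fin.last r))) := by
  rw [List.ofFn_succ]
  simp only [List.flatten_cons, List.append_assoc, Fin.castSucc_zero, Fin.succ_last,
    Fin.succ_castSucc]

def patOf : (r : ℕ) → (Fin (r + 1) → List σ) → (Fin r → List σ) → List (List σ ⊕ List σ)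
  | 0, v, _ => [Sum.inl (v 0)]
  | (r + 1), v, w =>
      Sum.inl (v 0) :: Sum.inr (w 0) ::
        patOf r (fun i => v i.succ) (fun i => w i.succ)

lemma plang_patOf : ∀ (r : ℕ) (v : Fin (r + 1) → List σ) (w : Fin r → List σ),
    plang (patOf r v w) = {u | ∃ l : Fin r → ℕ,
      u = (List.ofFn fun i : Fin r => v i.castSucc ++ wpow (w i) (l i)).flatten
        ++ v (Fin.last r)} := by
  intro r
  induction r with
  | zero =>
    intro v w
    ext u
    simp only [patOf, plang, Set.mem_singleton_iff, Set.mem_setOf_eq, List.ofFn_zero,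
      List.flatten_nil, List.nil_append]
    constructor
    · rintro ⟨y, hy, rfl⟩
      cases hy
      exact ⟨Fin.elim0, by simp [Fin.last]⟩
    · rintro ⟨l, rfl⟩
      exact ⟨[], rfl, by simp [Fin.last]⟩
  | succ r ih =>
    intro v w
    ext u
    simp only [patOf, plang, Set.mem_setOf_eq]
    constructor
    · rintro ⟨y, ⟨l0, z, hz, rfl⟩, rfl⟩
      rw [ih] at hz
      obtain ⟨l, rfl⟩ := hz
      refine ⟨Fin.cases l0 l, ?_⟩
      rw [ofFn_flatten_succ r v w (Fin.cases l0 l)]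
      simp only [Fin.cases_zero, Fin.cases_succ]
    · rintro ⟨l, rfl⟩
      rw [ofFn_flatten_succ r v w l]
      refine ⟨_, ⟨l 0, _, ?_, rfl⟩, rfl⟩
      rw [ih]
      exact ⟨fun i => l i.succ, rfl⟩

lemma isArid_quot_finite {k r : ℕ} {A : Set (List (Fin k))} (h : IsArid k r A) :
    {B | ∃ u : List (Fin k), B = lquot u A}.Finite := by
  obtain ⟨m, B, hB, hA⟩ := h
  choose v w hvw using hB
  apply quot_finite_of_patterns (fun i => patOf r (v i) (w i)) A
  rw [hA]
  refine Set.iUnion_congr fun i => ?_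
  rw [plang_patOf]
  exact hvw i

end Convert

section Count

lemma arid_count {k r : ℕ} {A : Set (List (Fin k))} (h : IsArid k r A) :
    ∃ (m₀ : ℕ) (φ : Fin m₀ → (Fin r → ℕ) → List (Fin k)),
      ∀ x ∈ A, ∃ i l, x = φ i l ∧ ∀ j, l j ≤ x.length := by
  obtain ⟨m, B, hB, hA⟩ := h
  choose v w hvw using hB
  refine ⟨m, fun i l => (List.ofFn fun j : Fin r =>
      v i j.castSucc ++ wpow (w i j) (l j)).flatten ++ v i (Fin.last r), ?_⟩
  intro x hx
  rw [hA] at hx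
  obtain ⟨i, hxi⟩ := Set.mem_iUnion.1 hx
  rw [hvw i] at hxi
  obtain ⟨l, hl⟩ := hxi
  set l' : Fin r → ℕ := fun j => if w i j = [] then 0 else l j with hl'
  have hfn : (fun j : Fin r => v i j.castSucc ++ wpow (w i j) (l j))
      = (fun j : Fin r => v i j.castSucc ++ wpow (w i j) (l' j)) := by
    funext j
    by_cases hw : w i j = []
    · simp [hl', hw]
    · simp [hl', hw]
  have heq : x = (List.ofFn fun j : Fin r =>
      v i j.castSucc ++ wpow (w i j) (l' j)).flatten ++ v i (Fin.last r) := by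
    rw [hl, hfn]
  refine ⟨i, l', heq, ?_⟩
  intro j
  by_cases hw : w i j = []
  · simp [hl', hw]
  · have hmem : (v i j.castSucc ++ wpow (w i j) (l' j)).length ∈
        (List.map List.length (List.ofFn fun j : Fin r =>
          v i j.castSucc ++ wpow (w i j) (l' j))) := by
      apply List.mem_map_of_mem
      rw [List.mem_ofFn]
      exact ⟨j, rfl⟩
    have hle := List.single_le_sum (l := (List.map List.length (List.ofFn fun j : Fin r =>
          v i j.castSucc ++ wpow (w i j) (l' j)))) (by simp) _ hmem
    have hs : ((List.ofFn fun j : Fin r =>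
        v i j.castSucc ++ wpow (w i j) (l' j)).flatten).length
        = (List.map List.length (List.ofFn fun j : Fin r =>
          v i j.castSucc ++ wpow (w i j) (l' j))).sum := List.length_flatten
    have h1 : (v i j.castSucc ++ wpow (w i j) (l' j)).length ≤ x.length := by
      rw [heq]
      simp only [List.length_append] at hle hs ⊢
      omega
    have h2 : l' j * (w i j).length ≤ (v i j.castSucc ++ wpow (w i j) (l' j)).length := by
      rw [List.length_append, length_wpow]
      omega
    have h3 : 1 ≤ (w i j).length := List.length_pos_iff.2 hw
    calc l' j = l' j * 1 := (Nat.mul_one _).symm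
      _ ≤ l' j * (w i j).length := Nat.mul_le_mul_left _ h3
      _ ≤ x.length := le_trans h2 h1

lemma sq_lt_two_pow : ∀ t : ℕ, 5 ≤ t → t ^ 2 < 2 ^ t := by
  intro t ht
  induction t, ht using Nat.le_induction with
  | base => decide
  | succ n hn ih =>
    have h2 : 2 ^ (n + 1) = 2 * 2 ^ n := by ring
    nlinarith

lemma exists_exp_gt (c r : ℕ) : ∃ m : ℕ, 0 < m ∧ c * (m + 1) ^ r < 2 ^ m := by
  set t := c + r + 5 with ht
  have ht5 : 5 ≤ t := by omega
  have htsq : t ^ 2 < 2 ^ t := sq_lt_two_pow t ht5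
  refine ⟨t * (r + 1), by positivity, ?_⟩
  have hm1 : t * (r + 1) + 1 ≤ t ^ 2 := by nlinarith
  have hc : c < 2 ^ t := lt_of_lt_of_le (Nat.lt_two_pow_self (n := c))
    (Nat.pow_le_pow_right (by norm_num) (by omega))
  have hmle : t * (r + 1) + 1 ≤ 2 ^ t := le_trans hm1 (le_of_lt htsq)
  calc c * (t * (r + 1) + 1) ^ r < 2 ^ t * (t * (r + 1) + 1) ^ r := by
        have hp : 0 < (t * (r + 1) + 1) ^ r := by positivity
        exact (Nat.mul_lt_mul_right hp).2 hc
    _ ≤ 2 ^ t * (2 ^ t) ^ r := Nat.mul_le_mul_left _ (Nat.pow_le_pow_left hmle r)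
    _ = 2 ^ (t * (r + 1)) := by rw [pow_mul]; ring

end Count

section Dyn

variable {k : ℕ}

lemma infinite_lquot_letter {S : Set (List (Fin k))} (h : S.Infinite) :
    ∃ a : Fin k, (lquot [a] S).Infinite := by
  by_contra h'
  push_neg at h'
  have hsub : S ⊆ {([] : List (Fin k))} ∪ ⋃ a : Fin k, (fun y => a :: y) '' lquot [a] S := by
    intro x hx
    match x with
    | [] => exact Or.inl rfl
    | a :: y => exact Or.inr (Set.mem_iUnion.2 ⟨a, y, hx, rfl⟩)
  exact h (Set.Finite.subset ((Set.finite_singleton _).union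
    (Set.finite_iUnion fun a => (h' a).image _)) hsub)

lemma exists_periodic_quot {A : Set (List (Fin k))}
    (hfin : {B | ∃ u : List (Fin k), B = lquot u A}.Finite)
    (Q₀ : Set (List (Fin k))) (hQ₀ : Q₀.Infinite) (hQ₀q : ∃ u, Q₀ = lquot u A) :
    ∃ s z : List (Fin k), z ≠ [] ∧ (lquot s Q₀).Infinite ∧
      lquot z (lquot s Q₀) = lquot s Q₀ := by
  have hstep : ∀ s : {s : List (Fin k) // (lquot s Q₀).Infinite},
      ∃ a : Fin k, (lquot (s.1 ++ [a]) Q₀).Infinite := by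
    intro s
    obtain ⟨a, ha⟩ := infinite_lquot_letter s.2
    exact ⟨a, by rw [lquot_append]; exact ha⟩
  choose st hst using hstep
  let f : ℕ → {s : List (Fin k) // (lquot s Q₀).Infinite} := fun n =>
    Nat.rec ⟨[], by simpa using hQ₀⟩ (fun _ s => ⟨s.1 ++ [st s], hst s⟩) n
  have hsucc : ∀ n, (f (n + 1)).1 = (f n).1 ++ [st (f n)] := fun n => rfl
  have hlen : ∀ n, (f n).1.length = n := by
    intro n
    induction n with
    | zero => rfl
    | succ n ih => rw [hsucc, List.length_append, ih]; rfl
  have hpre : ∀ n n', n ≤ n' → (f n).1 <+: (f n').1 := by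
    intro n n' h
    induction n', h using Nat.le_induction with
    | base => exact List.prefix_refl _
    | succ n' hn' ih => rw [hsucc]; exact ih.trans (List.prefix_append _ _)
  obtain ⟨u0, hu0⟩ := hQ₀q
  let g : ℕ → ↥{B | ∃ u : List (Fin k), B = lquot u A} := fun n =>
    ⟨lquot (f n).1 Q₀, ⟨u0 ++ (f n).1, by rw [lquot_append, ← hu0]⟩⟩
  haveI : Finite ↥{B | ∃ u : List (Fin k), B = lquot u A} := hfin.to_subtype
  obtain ⟨n, n', hne, heq⟩ := Finite.exists_ne_map_eq_of_infinite g
  have key : ∀ i j : ℕ, i < j → g i = g j →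
      ∃ s z : List (Fin k), z ≠ [] ∧ (lquot s Q₀).Infinite ∧
        lquot z (lquot s Q₀) = lquot s Q₀ := by
    intro i j hij hgij
    obtain ⟨z, hz⟩ := hpre i j (le_of_lt hij)
    refine ⟨(f i).1, z, ?_, (f i).2, ?_⟩
    · intro hznil
      rw [hznil, List.append_nil] at hz
      have := hlen i
      rw [hz, hlen j] at this
      omega
    · rw [← lquot_append, hz]
      exact (congrArg Subtype.val hgij).symm
  rcases Nat.lt_or_ge n n' with h | h
  · exact key n n' h heq
  · rcases Nat.lt_or_ge n' n with h' | h'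
    · exact key n' n h' heq.symm
    · omega

end Dyn

section Unique

variable {k : ℕ}

lemma prefix_wpow {w : List (Fin k)} {l : ℕ} (hl : 1 ≤ l) : w <+: wpow w l := by
  match l, hl with
  | (l + 1), _ => rw [wpow_succ]; exact List.prefix_append _ _

lemma mem_of_lquot_eq {z : List (Fin k)} {Q : Set (List (Fin k))}
    (h : lquot z Q = Q) {x : List (Fin k)} (hx : x ∈ Q) : z ++ x ∈ Q := by
  rw [← h] at hx; exact hx

lemma unique_dir {r m₀ : ℕ} {A : Set (List (Fin k))}
    {φ : Fin m₀ → (Fin r → ℕ) → List (Fin k)}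
    (hφ : ∀ x ∈ A, ∃ i l, x = φ i l ∧ ∀ j, l j ≤ x.length)
    {Q : Set (List (Fin k))} (vq : List (Fin k)) (hvq : Q = lquot vq A)
    (hret : ∀ t : List (Fin k), (lquot t Q).Infinite → ∃ s, lquot (t ++ s) Q = Q)
    (hQinf : Q.Infinite)
    {t₁ t₂ : List (Fin k)} (hlen : t₁.length = t₂.length)
    (h1 : (lquot t₁ Q).Infinite) (h2 : (lquot t₂ Q).Infinite) : t₁ = t₂ := by
  by_contra hne
  have ht₁ : t₁ ≠ [] := by
    intro h
    rw [h] at hlen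
    exact hne (h.trans (List.length_eq_zero_iff.1 hlen.symm).symm)
  obtain ⟨s₁, ha⟩ := hret t₁ h1
  obtain ⟨s₂, hb⟩ := hret t₂ h2
  set a := t₁ ++ s₁ with hadef
  set b := t₂ ++ s₂ with hbdef
  have halen : 0 < a.length := by
    rw [hadef, List.length_append]
    have : t₁.length ≠ 0 := fun h => ht₁ (List.length_eq_zero_iff.1 h)
    omega
  have hblen : 0 < b.length := by
    rw [hbdef, List.length_append]
    have : t₁.length ≠ 0 := fun h => ht₁ (List.length_eq_zero_iff.1 h)
    omega
  set c := wpow a b.length with hcdef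
  set d := wpow b a.length with hddef
  have hc : lquot c Q = Q := lquot_wpow ha _
  have hd : lquot d Q = Q := lquot_wpow hb _
  set L := a.length * b.length with hLdef
  have hL : 0 < L := Nat.mul_pos halen hblen
  have hclen : c.length = L := by rw [hcdef, length_wpow, hLdef]; exact Nat.mul_comm _ _
  have hdlen : d.length = L := by rw [hddef, length_wpow, hLdef]
  have ht₁c : t₁ <+: c := (List.prefix_append t₁ s₁).trans (prefix_wpow hblen)
  have ht₂d : t₂ <+: d := (List.prefix_append t₂ s₂).trans (prefix_wpow halen)
  have hcd : c ≠ d := by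
    intro h
    rw [h] at ht₁c
    rcases List.prefix_of_prefix_length_le ht₁c ht₂d (le_of_eq hlen) with hp
    exact hne (List.IsPrefix.eq_of_length hp hlen)
  obtain ⟨y₀, hy₀⟩ := hQinf.nonempty
  set gbl : Bool → List (Fin k) := fun e => if e then d else c with hgbl
  have hgL : ∀ e, (gbl e).length = L := by
    intro e; cases e
    · simpa [hgbl] using hclen
    · simpa [hgbl] using hdlen
  have hgQ : ∀ e, lquot (gbl e) Q = Q := by
    intro e; cases e
    · simpa [hgbl] using hc
    · simpa [hgbl] using hd
  set F : List Bool → List (Fin k) := fun bs => (bs.map gbl).flatten ++ y₀ with hF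
  have hFmem : ∀ bs, F bs ∈ Q := by
    intro bs
    induction bs with
    | nil => simpa [hF] using hy₀
    | cons e bs ih =>
      have : F (e :: bs) = gbl e ++ F bs := by
        simp [hF, List.append_assoc]
      rw [this]
      exact mem_of_lquot_eq (hgQ e) ih
  have hFlen : ∀ bs, (F bs).length = bs.length * L + y₀.length := by
    intro bs
    induction bs with
    | nil => simp [hF]
    | cons e bs ih =>
      have : F (e :: bs) = gbl e ++ F bs := by simp [hF, List.append_assoc]
      rw [this, List.length_append, ih, hgL]
      simp [List.length_cons]
      ring
  have hFinj : ∀ bs bs' : List Bool, bs.length = bs'.length → F bs = F bs' → bs = bs' := by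
    intro bs
    induction bs with
    | nil =>
      intro bs' hl _
      exact (List.length_eq_zero_iff.1 hl.symm).symm ▸ rfl
    | cons e bs ih =>
      intro bs' hl hFeq
      match bs' with
      | [] => simp at hl
      | e' :: bs' =>
        have he : F (e :: bs) = gbl e ++ F bs := by simp [hF, List.append_assoc]
        have he' : F (e' :: bs') = gbl e' ++ F bs' := by simp [hF, List.append_assoc]
        rw [he, he'] at hFeq
        obtain ⟨hg, hrest⟩ := List.append_inj hFeq (by rw [hgL, hgL])
        have hee : e = e' := by
          by_contra hee
          apply hcd
          cases e <;> cases e'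
          · exact absurd rfl hee
          · simpa [hgbl] using hg
          · simpa [hgbl] using hg.symm
          · exact absurd rfl hee
        rw [hee, ih bs' (by simpa using hl) hrest]
  -- counting
  set K := vq.length + L + y₀.length + 1 with hK
  obtain ⟨m, hm0, hmlt⟩ := exists_exp_gt (m₀ * K ^ r) r
  set M := vq.length + m * L + y₀.length with hM
  have hxmem : ∀ bv : Fin m → Bool, vq ++ F (List.ofFn bv) ∈ A := by
    intro bv
    have := hFmem (List.ofFn bv)
    rw [hvq] at this
    exact this
  have hxlen : ∀ bv : Fin m → Bool, (vq ++ F (List.ofFn bv)).length = M := by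
    intro bv
    rw [List.length_append, hFlen, List.length_ofFn, hM]
    exact (Nat.add_assoc _ _ _).symm
  have hchoice : ∀ bv : Fin m → Bool, ∃ (i : Fin m₀) (l : Fin r → ℕ),
      vq ++ F (List.ofFn bv) = φ i l ∧ ∀ j, l j ≤ M := by
    intro bv
    obtain ⟨i, l, hil, hb⟩ := hφ _ (hxmem bv)
    exact ⟨i, l, hil, fun j => (hxlen bv) ▸ hb j⟩
  choose If Lf hIL hLb using hchoice
  set G : (Fin m → Bool) → Fin m₀ × (Fin r → Fin (M + 1)) :=
    fun bv => (If bv, fun j => ⟨Lf bv j, Nat.lt_succ_of_le (hLb bv j)⟩) with hG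
  have hGinj : Function.Injective G := by
    intro bv bv' hGeq
    have h1' : If bv = If bv' := congrArg Prod.fst hGeq
    have h2' : Lf bv = Lf bv' := by
      funext j
      have := congrArg Prod.snd hGeq
      have := congrFun this j
      simpa [hG] using congrArg Fin.val this
    have hx : vq ++ F (List.ofFn bv) = vq ++ F (List.ofFn bv') := by
      rw [hIL bv, hIL bv', h1', h2']
    have hFF : F (List.ofFn bv) = F (List.ofFn bv') :=
      List.append_cancel_left hx
    have := hFinj _ _ (by simp) hFF
    exact List.ofFn_injective this
  have hcard := Fintype.card_le_of_injective G hGinj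
  simp only [Fintype.card_prod, Fintype.card_fun, Fintype.card_fin,
    Fintype.card_bool] at hcard
  have hMK : M + 1 ≤ K * (m + 1) := by
    rw [hM, hK]
    nlinarith
  have hfinal : (2 : ℕ) ^ m ≤ m₀ * K ^ r * (m + 1) ^ r := by
    calc (2 : ℕ) ^ m ≤ m₀ * (M + 1) ^ r := hcard
      _ ≤ m₀ * (K * (m + 1)) ^ r := Nat.mul_le_mul_left _ (Nat.pow_le_pow_left hMK r)
      _ = m₀ * K ^ r * (m + 1) ^ r := by rw [mul_pow, Nat.mul_assoc]
  omega

end Unique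

/-- If `A ⊆ Σ_k^*` is an infinite `k`-arid set, then there is a word `v`
such that `A ∩ v Σ_k^* = ⋃_{i=1}^{p} {v w^l u_i : l ∈ ℕ}` with `p ≥ 1` and `w ≠ ε`;
in particular `A ∩ v Σ_k^*` is `k`-arid of rank `≤ 1`. -/
theorem stmt_16 (k : ℕ) (hk : 2 ≤ k) (A : Set (List (Fin k)))
    (hA : ∃ r : ℕ, IsArid k r A) (hinf : A.Infinite) :
    ∃ (v : List (Fin k)) (p : ℕ) (w : List (Fin k)) (u : Fin p → List (Fin k)),
      1 ≤ p ∧ w ≠ [] ∧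
      {x ∈ A | v <+: x} = (⋃ i : Fin p, {x | ∃ l : ℕ, x = v ++ wpow w l ++ u i}) ∧
      IsArid k 1 {x ∈ A | v <+: x} := by
  obtain ⟨r, hAr⟩ := hA
  have hfin := isArid_quot_finite hAr
  obtain ⟨m₀, φ, hφ⟩ := arid_count hAr
  set Qs : Set (Set (List (Fin k))) :=
    {Q | (∃ u : List (Fin k), Q = lquot u A) ∧ Q.Infinite} with hQs
  have hQsfin : Qs.Finite := hfin.subset (fun Q hQ => hQ.1)
  have hAQs : A ∈ Qs := ⟨⟨[], rfl⟩, hinf⟩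
  set D : Set (List (Fin k)) → Set (Set (List (Fin k))) :=
    fun Q => {Q' ∈ Qs | ∃ u, Q' = lquot u Q} with hD
  have hDsub : ∀ Q, D Q ⊆ Qs := fun Q Q' hQ' => hQ'.1
  obtain ⟨Q₀, hQ₀Qs, hmin⟩ :=
    Set.exists_min_image Qs (fun Q => (D Q).ncard) hQsfin ⟨A, hAQs⟩
  have hQ₀self : Q₀ ∈ D Q₀ := ⟨hQ₀Qs, [], rfl⟩
  have hret0 : ∀ Q ∈ D Q₀, Q₀ ∈ D Q := by
    intro Q hQ
    by_contra hc
    obtain ⟨hQQs, u, rfl⟩ := hQ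
    have hsub : D (lquot u Q₀) ⊆ D Q₀ := by
      rintro Q' ⟨hQ's, u', rfl⟩
      exact ⟨hQ's, u ++ u', (lquot_append u u' Q₀).symm⟩
    have hne : D (lquot u Q₀) ≠ D Q₀ := fun h => hc (h ▸ hQ₀self)
    have hlt := Set.ncard_lt_ncard (ssubset_of_subset_of_ne hsub hne)
      (hQsfin.subset (hDsub Q₀))
    exact absurd (hmin _ hQQs) (not_le.2 hlt)
  obtain ⟨u₀, hu₀⟩ := hQ₀Qs.1
  obtain ⟨s, z, hznil, hQinf, hzQ⟩ :=
    exists_periodic_quot hfin Q₀ hQ₀Qs.2 ⟨u₀, hu₀⟩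
  set Q := lquot s Q₀ with hQdef
  have hQu : Q = lquot (u₀ ++ s) A := by rw [lquot_append, ← hu₀]
  have hQQs : Q ∈ Qs := ⟨⟨u₀ ++ s, hQu⟩, hQinf⟩
  have hretQ : ∀ t : List (Fin k), (lquot t Q).Infinite →
      ∃ s', lquot (t ++ s') Q = Q := by
    intro t htinf
    have htD : lquot t Q ∈ D Q₀ :=
      ⟨⟨⟨u₀ ++ s ++ t, by rw [lquot_append, ← hQu]⟩, htinf⟩,
        s ++ t, by rw [lquot_append, ← hQdef]⟩
    obtain ⟨_, s', hs'⟩ := hret0 _ htD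
    refine ⟨s' ++ s, ?_⟩
    rw [lquot_append, lquot_append, ← hs', ← hQdef]
  have huniq : ∀ t : List (Fin k), t.length = z.length →
      (lquot t Q).Infinite → t = z := by
    intro t ht htinf
    exact unique_dir hφ (u₀ ++ s) hQu hretQ hQinf ht htinf
      (by rw [hzQ]; exact hQinf)
  set R := {y ∈ Q | ¬ z <+: y} with hR
  have hRfin : R.Finite := by
    have hsplit : R ⊆ {y : List (Fin k) | y.length < z.length} ∪
        ⋃ t ∈ {t : List (Fin k) | t.length = z.length ∧ t ≠ z},
          (fun y => t ++ y) '' lquot t Q := by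
      rintro y ⟨hyQ, hynp⟩
      rcases Nat.lt_or_ge y.length z.length with h | h
      · exact Or.inl h
      · right
        set t := y.take z.length with htdef
        have htlen : t.length = z.length := by rw [htdef, List.length_take]; omega
        have htne : t ≠ z := fun hh => hynp (hh ▸ List.take_prefix _ _)
        refine Set.mem_biUnion ⟨htlen, htne⟩ ⟨y.drop z.length, ?_, List.take_append_drop _ _⟩
        show t ++ y.drop z.length ∈ Q
        rw [htdef, List.take_append_drop]
        exact hyQ
    refine Set.Finite.subset (Set.Finite.union (List.finite_length_lt _ _)
      (Set.Finite.biUnion ?_ ?_)) hsplit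
    · exact Set.Finite.subset (List.finite_length_le (Fin k) z.length)
        (fun t ht => le_of_eq ht.1)
    · intro t ht
      refine Set.Finite.image _ (Set.not_infinite.1 fun hinf' => ht.2 (huniq t ht.1 hinf'))
  have hQstruct : ∀ x ∈ Q, ∃ (l : ℕ) (y : List (Fin k)), y ∈ R ∧ x = wpow z l ++ y := by
    have : ∀ n : ℕ, ∀ x : List (Fin k), x.length = n → x ∈ Q →
        ∃ (l : ℕ) (y : List (Fin k)), y ∈ R ∧ x = wpow z l ++ y := by
      intro n
      induction n using Nat.strong_induction_on with
      | _ n ih =>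
        intro x hxl hxQ
        by_cases hp : z <+: x
        · obtain ⟨x', rfl⟩ := hp
          have hx' : x' ∈ Q := by
            have : x' ∈ lquot z Q := hxQ
            rw [hzQ] at this
            exact this
          have hzl : z.length ≠ 0 := fun hh => hznil (List.length_eq_zero_iff.1 hh)
          have hlt : x'.length < n := by rw [← hxl, List.length_append]; omega
          obtain ⟨l, y, hy, rfl⟩ := ih _ hlt x' rfl hx'
          exact ⟨l + 1, y, hy, by rw [wpow_succ, List.append_assoc]⟩
        · exact ⟨0, x, ⟨hxQ, hp⟩, by simp⟩
    exact fun x hx => this x.length x rfl hx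
  have hback : ∀ y ∈ R, ∀ l : ℕ, wpow z l ++ y ∈ Q := by
    intro y hy l
    induction l with
    | zero => simpa using hy.1
    | succ l ih =>
      rw [wpow_succ, List.append_assoc]
      exact mem_of_lquot_eq hzQ ih
  have hRne : R.Nonempty := by
    obtain ⟨x, hx⟩ := hQinf.nonempty
    obtain ⟨l, y, hy, _⟩ := hQstruct x hx
    exact ⟨y, hy⟩
  have hufex : ∃ (p : ℕ) (uf : Fin p → List (Fin k)), 1 ≤ p ∧ (∀ i, uf i ∈ R) ∧
      ∀ y ∈ R, ∃ i, uf i = y := by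
    classical
    refine ⟨hRfin.toFinset.card,
      fun i => (hRfin.toFinset.equivFin.symm i : List (Fin k)), ?_, ?_, ?_⟩
    · exact Finset.card_pos.2 ⟨hRne.some, hRfin.mem_toFinset.2 hRne.some_mem⟩
    · intro i
      exact hRfin.mem_toFinset.1 (hRfin.toFinset.equivFin.symm i).2
    · intro y hy
      exact ⟨hRfin.toFinset.equivFin ⟨y, hRfin.mem_toFinset.2 hy⟩, by simp⟩
  obtain ⟨p, uf, hp1, hufR, hufsurj⟩ := hufex
  set v := u₀ ++ s with hv
  have hmain : {x ∈ A | v <+: x} =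
      ⋃ i : Fin p, {x | ∃ l : ℕ, x = v ++ wpow z l ++ uf i} := by
    ext x
    constructor
    · rintro ⟨hxA, hxp⟩
      obtain ⟨x', rfl⟩ := hxp
      have hx'Q : x' ∈ Q := by rw [hQu]; exact hxA
      obtain ⟨l, y, hy, rfl⟩ := hQstruct x' hx'Q
      obtain ⟨i, hi⟩ := hufsurj y hy
      exact Set.mem_iUnion.2 ⟨i, l, by rw [hi, ← List.append_assoc]⟩
    · intro hx
      obtain ⟨i, l, rfl⟩ := Set.mem_iUnion.1 hx
      have hmem : wpow z l ++ uf i ∈ Q := hback _ (hufR i) l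
      rw [hQu] at hmem
      refine ⟨by rw [List.append_assoc]; exact hmem, ?_⟩
      rw [List.append_assoc]
      exact List.prefix_append _ _
  refine ⟨v, p, z, uf, hp1, hznil, hmain, p, fun i => {x | ∃ l : ℕ, x = v ++ wpow z l ++ uf i},
    fun i => ?_, hmain⟩
  refine ⟨![v, uf i], ![z], ?_⟩
  ext x
  simp only [Set.mem_setOf_eq, List.ofFn_succ, List.ofFn_zero, List.flatten_cons,
    List.flatten_nil, List.append_nil, Matrix.cons_val_zero, Matrix.cons_val_one,
    Matrix.head_cons]
  constructor
  · rintro ⟨l, rfl⟩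
    refine ⟨fun _ => l, ?_⟩
    simp [Fin.last, List.append_assoc]
  · rintro ⟨l, rfl⟩
    refine ⟨l 0, ?_⟩
    simp [Fin.last, List.append_assoc]
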